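/- Let P̃, Q̃, R̃ : ℝ³ → ℝ be C¹ functions with P̃(0,0,0) ≠ 0 and Q̃(0,0,0) ≠ 0, and let L ∈ ℝ, δ > 0. Set a₀ = Q̃(0), b₀ = −P̃(0), a₁ = L/P̃(0), b₂ = −L/Q̃(0), a₂ = (1 + 2P̃(0)Q̃(0)L + L²δ)/(P̃(0)²Q̃(0)), and define the vector field X_{L,δ}(x,y,z) = ( ((a₀ + δa₁)x + b₀y)·P̃(x,y,z) , ((a₀ + δa₂)x + (b₀ + δb₂)y)·Q̃(x,y,z) , (a₀x + b₀y)·R̃(x,y,z) ). Then the origin is an equilibrium of X_{L,δ}, and the characteristic polynomial of the Jacobian matrix of X_{L,δ} at the origin is p(λ) = −λ³ − δλ; in particular the eigenvalues are 0, i√δ, and −i√δ, so the origin is a Hopf-Zero equilibrium of X_{L,δ}. -/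

import Mathlib

open ContinuousLinearMap in
lemma comp_lin_deriv (F : (Fin 3 → ℝ) → ℝ) (hF : ContDiff ℝ 1 F) (c d : ℝ) :
    HasFDerivAt (fun v : Fin 3 → ℝ => (c * v 0 + d * v 1) * F v)
      ((F 0) • (c • (proj 0 : (Fin 3 → ℝ) →L[ℝ] ℝ) + d • proj 1)) 0 := by
  have h1 : HasFDerivAt (fun v : Fin 3 → ℝ => c * v 0 + d * v 1)
      (c • (proj 0 : (Fin 3 → ℝ) →L[ℝ] ℝ) + d • proj 1) 0 := by
    have := (c • (proj 0 : (Fin 3 → ℝ) →L[ℝ] ℝ) + d • proj 1).hasFDerivAt (x := 0)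
    convert this using 1
    ext v
    simp
  have h2 : HasFDerivAt F (fderiv ℝ F 0) 0 :=
    (hF.differentiable one_ne_zero 0).hasFDerivAt
  have := h1.mul h2
  simp at this
  rw [smul_add]
  exact this

theorem stmt_7 (P Q R : (Fin 3 → ℝ) → ℝ)
    (hP : ContDiff ℝ 1 P) (hQ : ContDiff ℝ 1 Q) (hR : ContDiff ℝ 1 R)
    (hP0 : P 0 ≠ 0) (hQ0 : Q 0 ≠ 0)
    (L δ : ℝ) (hδ : 0 < δ)
    (a₀ b₀ a₁ b₂ a₂ : ℝ)
    (ha₀ : a₀ = Q 0) (hb₀ : b₀ = -P 0) (ha₁ : a₁ = L / P 0) (hb₂ : b₂ = -L / Q 0)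
    (ha₂ : a₂ = (1 + 2*(P 0)*(Q 0)*L + L^2*δ) / ((P 0)^2 * Q 0))
    (X : (Fin 3 → ℝ) → (Fin 3 → ℝ))
    (hX : X = fun v => ![((a₀ + δ*a₁) * v 0 + b₀ * v 1) * P v,
                         ((a₀ + δ*a₂) * v 0 + (b₀ + δ*b₂) * v 1) * Q v,
                         (a₀ * v 0 + b₀ * v 1) * R v]) :
    X 0 = 0 ∧
    ∃ J : Matrix (Fin 3) (Fin 3) ℝ,
      HasFDerivAt X (LinearMap.toContinuousLinearMap (Matrix.toLin' J)) 0 ∧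
      (∀ z : ℂ,
        Matrix.det (J.map (Complex.ofReal) - z • (1 : Matrix (Fin 3) (Fin 3) ℂ))
          = -z^3 - (δ : ℂ) * z) ∧
      (∀ z : ℂ,
        Matrix.det (J.map (Complex.ofReal) - z • (1 : Matrix (Fin 3) (Fin 3) ℂ)) = 0
          ↔ z = 0 ∨ z = Complex.I * ((Real.sqrt δ : ℝ) : ℂ)
              ∨ z = -(Complex.I * ((Real.sqrt δ : ℝ) : ℂ))) := by
  subst hX
  constructor
  · funext i
    fin_cases i <;> simp
  set J : Matrix (Fin 3) (Fin 3) ℝ :=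
    !![(a₀ + δ*a₁) * P 0, b₀ * P 0, 0;
       (a₀ + δ*a₂) * Q 0, (b₀ + δ*b₂) * Q 0, 0;
       a₀ * R 0, b₀ * R 0, 0] with hJ
  have hdet : ∀ z : ℂ,
      Matrix.det (J.map (Complex.ofReal) - z • (1 : Matrix (Fin 3) (Fin 3) ℂ))
        = -z^3 - (δ : ℂ) * z := by
    intro z
    rw [Matrix.det_fin_three]
    simp only [hJ, Matrix.map_apply, Matrix.sub_apply, Matrix.smul_apply,
      Matrix.one_apply, Matrix.cons_val', Matrix.cons_val_zero, Matrix.cons_val_one,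
      Matrix.head_cons, Matrix.empty_val', Matrix.cons_val_fin_one, Matrix.head_fin_const,
      Matrix.of_apply, Matrix.cons_val_two, Matrix.tail_cons, Matrix.head_fin_const]
    subst ha₀ hb₀ ha₁ hb₂ ha₂
    have hp : ((P 0 : ℝ) : ℂ) ≠ 0 := by exact_mod_cast hP0
    have hq : ((Q 0 : ℝ) : ℂ) ≠ 0 := by exact_mod_cast hQ0
    push_cast
    field_simp
    ring
  refine ⟨J, ?_, hdet, ?_⟩
  · apply hasFDerivAt_pi''
    intro i
    fin_cases i
    · have := comp_lin_deriv P hP (a₀ + δ*a₁) b₀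
      refine this.congr_fderiv ?_
      ext v
      simp [hJ, Matrix.toLin'_apply, Matrix.mulVec, dotProduct,
        Fin.sum_univ_three]
      ring
    · have := comp_lin_deriv Q hQ (a₀ + δ*a₂) (b₀ + δ*b₂)
      refine this.congr_fderiv ?_
      ext v
      simp [hJ, Matrix.toLin'_apply, Matrix.mulVec, dotProduct,
        Fin.sum_univ_three]
      ring
    · have := comp_lin_deriv R hR a₀ b₀
      refine this.congr_fderiv ?_
      ext v
      simp [hJ, Matrix.toLin'_apply, Matrix.mulVec, dotProduct,
        Fin.sum_univ_three]
      ring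
  · intro z
    rw [hdet z]
    set w : ℂ := Complex.I * ((Real.sqrt δ : ℝ) : ℂ) with hw
    have hw2 : w ^ 2 = -(δ : ℂ) := by
      rw [hw, mul_pow, Complex.I_sq, ← Complex.ofReal_pow, Real.sq_sqrt hδ.le]
      ring
    have hfac : -z^3 - (δ : ℂ) * z = -(z * ((z - w) * (z + w))) := by
      linear_combination (-z) * hw2
    rw [hfac]
    simp [mul_eq_zero, sub_eq_zero, add_eq_zero_iff_eq_neg]
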